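/- Let C be a triangulated category, S an S-system in C, and Q : C → C[S⁻¹] the localization functor. For an object P of C the following are equivalent: (1) Hom_C(P, X) = 0 for every S-acyclic object X (every X with Q(X) ≅ 0); (2) every morphism s : X → P in S admits a morphism t : P → X with s ∘ t = 1_P; (3) for every object X of C, the natural map Hom_C(P, X) → Hom_{C[S⁻¹]}(P, X) induced by Q is a bijection; (4) for every morphism f : P → Y and every s : X → Y in S, there is a unique g : P → X with f = s ∘ g. -/

import Mathlib

open CategoryTheory Limits Pretriangulated ZeroObject

universe v u

variable {C : Type u} [Category.{v} C] [HasZeroObject C] [HasShift C ℤ] [Preadditive C]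
  [∀ n : ℤ, (shiftFunctor C n).Additive] [Pretriangulated C]

/-- A null system in a triangulated category: it contains `0`, is stable under the
translation and its inverse, is closed under cones of morphisms between its objects,
and contains the direct summands of all of its objects. -/
structure IsNullSystem (N : Set C) : Prop where
  zero : (0 : C) ∈ N
  shift : ∀ X : C, X ∈ N ↔ (X⟦(1 : ℤ)⟧ ∈ N)
  tri : ∀ T : Triangle C, (T ∈ distTriang C) → T.obj₁ ∈ N → T.obj₂ ∈ N → T.obj₃ ∈ N
  summand : ∀ (X Y : C) (b : BinaryBicone X Y), b.IsBilimit → b.pt ∈ N → X ∈ N ∧ Y ∈ N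

/-- An S-system in a triangulated category: a localizing class (multiplicative system
with a calculus of left and of right fractions) compatible with the triangulation
(stable under shifts, and commutative squares between distinguished triangles with
vertical morphisms in `S` can be completed by a third morphism in `S`) and saturated
(`s ∈ S` iff the localization functor `Q` sends `s` to an isomorphism). -/
class SSystem (S : MorphismProperty C) : Prop where
  left : S.HasLeftCalculusOfFractions
  right : S.HasRightCalculusOfFractions
  compat : S.IsCompatibleWithTriangulation
  saturated : ∀ ⦃X Y : C⦄ (f : X ⟶ Y), S f ↔ IsIso (S.Q.map f)

instance (S : MorphismProperty C) [h : SSystem S] : S.HasLeftCalculusOfFractions := h.left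
instance (S : MorphismProperty C) [h : SSystem S] : S.HasRightCalculusOfFractions := h.right
instance (S : MorphismProperty C) [h : SSystem S] : S.IsCompatibleWithTriangulation := h.compat

/-- `S(N)`: the class of morphisms `f` admitting a distinguished triangle over `f`
whose cone lies in `N`. -/
def coneClass (N : Set C) : MorphismProperty C := fun X Y f =>
  ∃ (Z : C) (g : Y ⟶ Z) (h : Z ⟶ X⟦(1 : ℤ)⟧),
    (Triangle.mk f g h ∈ distTriang C) ∧ Z ∈ N
/-- A1.4.1: characterizations of `S`-projective objects.  For an object `P` the
following are equivalent: (1) every morphism from `P` to an `S`-acyclic object is zero;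
(2) every `s : X ⟶ P` in `S` admits a section `t` with `s ∘ t = 1`; (3) for every
`X`, the natural map `Hom_C(P, X) → Hom_{C[S⁻¹]}(P, X)` is bijective; (4) morphisms
from `P` lift uniquely along morphisms of `S`. -/
theorem sProjective_tfae (S : MorphismProperty C) [SSystem S] (P : C) :
    List.TFAE [
      ∀ X : C, IsZero (S.Q.obj X) → ∀ f : P ⟶ X, f = 0,
      ∀ (X : C) (s : X ⟶ P), S s → ∃ t : P ⟶ X, t ≫ s = 𝟙 P,
      ∀ X : C, Function.Bijective (fun f : P ⟶ X => S.Q.map f),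
      ∀ (X Y : C) (f : P ⟶ Y) (s : X ⟶ Y), S s → ∃! g : P ⟶ X, f = g ≫ s] := by
  tfae_have 1 → 2 := by
    intro h1 X s hs
    obtain ⟨Z, g, h, hdist⟩ := Pretriangulated.distinguished_cocone_triangle s
    have hiso : IsIso (S.Q.map s) := (SSystem.saturated s).1 hs
    have hQT := S.Q.map_distinguished _ hdist
    have hz : IsZero (S.Q.obj Z) :=
      Triangle.isZero₃_of_isIso₁ _ hQT hiso
    have hg : g = 0 := h1 Z hz g
    obtain ⟨t, ht⟩ := Triangle.coyoneda_exact₂ _ hdist (𝟙 P)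
      (by change 𝟙 P ≫ g = 0; rw [hg, comp_zero])
    exact ⟨t, ht.symm⟩
  tfae_have 2 → 3 := by
    intro h2 X
    constructor
    · intro f g hfg
      simp only at hfg
      obtain ⟨P', s, hs, hcomm⟩ := (MorphismProperty.map_eq_iff_precomp S.Q S f g).1 hfg
      obtain ⟨t, ht⟩ := h2 P' s hs
      calc f = (t ≫ s) ≫ f := by rw [ht, Category.id_comp]
        _ = t ≫ s ≫ g := by rw [Category.assoc, hcomm]
        _ = (t ≫ s) ≫ g := by rw [Category.assoc]
        _ = g := by rw [ht, Category.id_comp]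
    · intro φ
      obtain ⟨ψ, hψ⟩ := Localization.exists_rightFraction S.Q S φ
      obtain ⟨t, ht⟩ := h2 _ ψ.s ψ.hs
      have := Localization.inverts S.Q S ψ.s ψ.hs
      refine ⟨t ≫ ψ.f, ?_⟩
      have htQ : S.Q.map t = inv (S.Q.map ψ.s) := by
        rw [← cancel_mono (S.Q.map ψ.s), IsIso.inv_hom_id, ← S.Q.map_comp, ht, S.Q.map_id]
      simp only [Functor.map_comp, htQ, hψ]
      rfl
  tfae_have 3 → 4 := by
    intro h3 X Y f s hs
    have hiso : IsIso (S.Q.map s) := (SSystem.saturated s).1 hs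
    obtain ⟨g, hg⟩ := (h3 X).2 (S.Q.map f ≫ inv (S.Q.map s))
    simp only at hg
    refine ⟨g, ((h3 Y).1 ?_).symm, fun g' hg' => (h3 X).1 ?_⟩
    · show S.Q.map (g ≫ s) = S.Q.map f
      rw [S.Q.map_comp, hg, Category.assoc, IsIso.inv_hom_id, Category.comp_id]
    · show S.Q.map g' = S.Q.map g
      rw [hg, ← cancel_mono (S.Q.map s), Category.assoc, IsIso.inv_hom_id,
        Category.comp_id, ← S.Q.map_comp, ← hg']
  tfae_have 4 → 1 := by
    intro h4 X hX f
    have hz : IsZero (S.Q.obj (0 : C)) := S.Q.map_isZero (isZero_zero C)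
    have hiso : IsIso (S.Q.map (0 : (0 : C) ⟶ X)) :=
      ⟨⟨0, hz.eq_of_src _ _, hX.eq_of_src _ _⟩⟩
    have hs : S (0 : (0 : C) ⟶ X) := (SSystem.saturated _).2 hiso
    obtain ⟨g, hg, -⟩ := h4 (0 : C) X f 0 hs
    rw [hg, comp_zero]
  tfae_finish
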